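/- Let Z(Spin(7)) ≅ ℤ/2 denote the center of Spin(7) and consider the subgroup G_2 ⊂ Spin(7) (the stabilizer of a spinor, acting irreducibly on the 8-dimensional real spin representation). Then the normalizer of G_2 in Spin(7) equals G_2 × Z(Spin(7)) = G_2 · ℤ/2. -/

import Mathlib

/-!
STATEMENT 17: N_{Spin(7)}(G₂) = G₂ × Z(Spin(7)) = G₂ · ℤ/2.  Following the context, this
is formalized for a group Γ (= Spin(7)) acting linearly and orthogonally on an
8-dimensional real inner product space Δ (the spin representation), with G₂ the
stabilizer of a unit spinor s, a central element z acting as -1 (generating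
Z(Spin(7)) ≅ ℤ/2), and the Schur-type hypothesis that the fixed vectors of G₂ in Δ are
exactly ℝ·s (since Δ|_{G₂} = ℝ ⊕ ℝ⁷ with ℝ⁷ irreducible).  The conclusion: the
normalizer of G₂ equals G₂ ⊔ ⟨z⟩, and z ∉ G₂ (so the extension is by ℤ/2).
-/

open Module

theorem normalizer_G2_in_Spin7 {Γ : Type*} [Group Γ] {Δ : Type*} [NormedAddCommGroup Δ]
    [InnerProductSpace ℝ Δ] [FiniteDimensional ℝ Δ] [MulAction Γ Δ]
    (hlin : ∀ γ : Γ, IsLinearMap ℝ fun v : Δ => γ • v)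
    (horth : ∀ (γ : Γ) (v : Δ), ‖γ • v‖ = ‖v‖)
    (hdim : finrank ℝ Δ = 8)
    (s : Δ) (hs : ‖s‖ = 1)
    (z : Γ) (hzc : z ∈ Subgroup.center Γ) (hz : ∀ v : Δ, z • v = -v)
    (hfix : ∀ v : Δ, (∀ g ∈ MulAction.stabilizer Γ s, g • v = v) → ∃ r : ℝ, v = r • s) :
    Subgroup.normalizer (MulAction.stabilizer Γ s)
        = MulAction.stabilizer Γ s ⊔ Subgroup.zpowers z ∧
      z ∉ MulAction.stabilizer Γ s := by
  have hs0 : s ≠ 0 := by intro h; rw [h, norm_zero] at hs; norm_num at hs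
  have hzs : z ∉ MulAction.stabilizer Γ s := by
    intro h
    have : z • s = s := h
    rw [hz] at this
    have h2 : s + s = 0 := by simpa using congrArg (fun v => s + v) this.symm
    have h3 : (2:ℝ) • s = 0 := by rw [two_smul]; exact h2
    exact hs0 (by simpa using smul_eq_zero.mp h3)
  refine ⟨le_antisymm ?_ ?_, hzs⟩
  · intro n hn
    have hGfix : ∀ g ∈ MulAction.stabilizer Γ s, g • (n • s) = n • s := by
      intro g hg
      have hninv : n⁻¹ ∈ Subgroup.normalizer (MulAction.stabilizer Γ s : Set Γ) :=
        (Subgroup.normalizer _).inv_mem hn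
      have h1 : n⁻¹ * g * n ∈ MulAction.stabilizer Γ s := by
        have := (Subgroup.mem_normalizer_iff.mp hninv g).mp hg
        simpa using this
      have h2 : (n⁻¹ * g * n) • s = s := h1
      have key : g * n = n * (n⁻¹ * g * n) := by group
      calc g • (n • s) = (g * n) • s := (mul_smul g n s).symm
        _ = (n * (n⁻¹ * g * n)) • s := by rw [key]
        _ = n • ((n⁻¹ * g * n) • s) := mul_smul _ _ _
        _ = n • s := by rw [h2]
    obtain ⟨r, hr⟩ := hfix _ hGfix
    have hnorm : ‖n • s‖ = 1 := by rw [horth, hs]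
    have habs : |r| = 1 := by
      rw [hr, norm_smul, hs, mul_one] at hnorm; simpa using hnorm
    rcases abs_eq (by norm_num : (0:ℝ) ≤ 1) |>.mp habs with h1 | h1
    · have : n ∈ MulAction.stabilizer Γ s := by
        rw [MulAction.mem_stabilizer_iff, hr, h1, one_smul]
      exact Subgroup.mem_sup_left this
    · have hzn : z * n ∈ MulAction.stabilizer Γ s := by
        rw [MulAction.mem_stabilizer_iff, mul_smul, hz, hr, h1]
        simp
      have : n = z⁻¹ * (z * n) := by group
      rw [this]
      exact mul_mem (Subgroup.mem_sup_right (Subgroup.inv_mem _ (Subgroup.mem_zpowers z)))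
        (Subgroup.mem_sup_left hzn)
  · rw [sup_le_iff]
    constructor
    · exact Subgroup.le_normalizer
    · rw [Subgroup.zpowers_le]
      exact Subgroup.center_le_normalizer _ hzc
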